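/- Let n ≥ 6 be an even integer. Let G be the group presented by generators g₁, …, g_{n−1} with the two defining relations g_{n−1}·g_{n−2}⁻¹·g_{n−3}·g_{n−4}⁻¹ ⋯ g₃·g₂⁻¹·g₁ = 1 and g_{n−1}⁻¹·g_{n−2}·g_{n−3}⁻¹ ⋯ g₂·g₁⁻¹ = 1, and let H be the group presented by generators g₁, …, g_{n−1}, r with those same two relations together with r² = 1 and r·gᵢ·r = gᵢ⁻¹ for i = 1, …, n−1. Then there exists a group isomorphism φ : H → H_n satisfying φ(r) = r_n and φ(gᵢ) = r_n·rᵢ for all i = 1, …, n−1. -/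

import Mathlib

/-- For an even integer `n ≥ 6`, `H_n` is the group presented by generators
`r₁, …, r_n` (here indexed by `Fin n`, with `i : Fin n` standing for `r_{i+1}`) with
defining relations `rᵢ² = 1` for all `i` and `r_n · r_{n-1} ⋯ r₂ · r₁ = 1`. -/
def HnRels (n : ℕ) : Set (FreeGroup (Fin n)) :=
  {w | ∃ i : Fin n, w = FreeGroup.of i * FreeGroup.of i} ∪
    {((List.ofFn (fun i : Fin n => FreeGroup.of i)).reverse).prod}

/-- Relations of the group `H`: generators `g₁, …, g_{n-1}` (with `j : Fin (n-1)`
standing for `g_{j+1}`) and `r` (the generator `none`), with the two surface-group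
relations `g_{n-1} · g_{n-2}⁻¹ · g_{n-3} ⋯ g₃ · g₂⁻¹ · g₁ = 1`,
`g_{n-1}⁻¹ · g_{n-2} · g_{n-3}⁻¹ ⋯ g₂ · g₁⁻¹ = 1`, together with `r² = 1` and
`r · gᵢ · r = gᵢ⁻¹` (equivalently `r · gᵢ · r · gᵢ = 1`) for `i = 1, …, n-1`. -/
def HRels (n : ℕ) : Set (FreeGroup (Option (Fin (n - 1)))) :=
  {((List.ofFn (fun j : Fin (n - 1) => if (j.val + 1) % 2 = 0 then
      (FreeGroup.of (some j))⁻¹ else FreeGroup.of (some j))).reverse).prod} ∪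
  {((List.ofFn (fun j : Fin (n - 1) => if (j.val + 1) % 2 = 1 then
      (FreeGroup.of (some j))⁻¹ else FreeGroup.of (some j))).reverse).prod} ∪
  {FreeGroup.of (none : Option (Fin (n - 1))) * FreeGroup.of none} ∪
  {w | ∃ j : Fin (n - 1), w = FreeGroup.of (none : Option (Fin (n - 1))) *
    FreeGroup.of (some j) * FreeGroup.of none * FreeGroup.of (some j)}



namespace HisoAux
variable {G : Type*} [Group G]

/-- `pprod e m = e (m-1) * e (m-2) * ⋯ * e 0`. -/
def pprod (e : ℕ → G) : ℕ → G
  | 0 => 1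
  | m + 1 => e m * pprod e m

lemma pprod_zero (e : ℕ → G) : pprod e 0 = 1 := rfl
lemma pprod_succ (e : ℕ → G) (m : ℕ) : pprod e (m + 1) = e m * pprod e m := rfl

lemma revprod_eq (e : ℕ → G) : ∀ m, (List.ofFn fun j : Fin m => e j.val).reverse.prod = pprod e m
  | 0 => by simp [pprod]
  | m + 1 => by
    rw [List.ofFn_succ']
    simp only [List.concat_eq_append, List.reverse_append, List.reverse_singleton,
      List.singleton_append, List.prod_cons, Fin.coe_castSucc, Fin.val_last]
    rw [revprod_eq e m, pprod_succ]

lemma pprod_congr {e e' : ℕ → G} : ∀ m, (∀ k < m, e k = e' k) → pprod e m = pprod e' m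
  | 0, _ => rfl
  | m + 1, h => by
    rw [pprod_succ, pprod_succ, h m (by omega), pprod_congr m (fun k hk => h k (by omega))]

lemma L1 (ρ : G) (x : ℕ → G) (hρ : ρ * ρ = 1) (hx : ∀ k, x k * x k = 1) :
    ∀ m, pprod (fun k => if (k + 1) % 2 = 0 then (ρ * x k)⁻¹ else ρ * x k) (2 * m + 1)
      = ρ * pprod x (2 * m + 1)
  | 0 => by
    rw [show 2 * 0 + 1 = 1 from rfl, pprod_succ, pprod_succ, pprod_zero, pprod_zero]
    rw [if_neg (by omega : ¬ (0 + 1) % 2 = 0), mul_assoc]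
  | m + 1 => by
    have hρc : ∀ t : G, ρ * (ρ * t) = t := fun t => by rw [← mul_assoc, hρ, one_mul]
    have hρinv : ρ⁻¹ = ρ := inv_eq_of_mul_eq_one_right hρ
    have hxinv : ∀ k, (x k)⁻¹ = x k := fun k => inv_eq_of_mul_eq_one_right (hx k)
    have h3 : 2 * (m + 1) + 1 = (2 * m + 1) + 1 + 1 := by omega
    rw [h3, pprod_succ _ (2 * m + 1 + 1), pprod_succ _ (2 * m + 1), L1 ρ x hρ hx m,
      pprod_succ x (2 * m + 1 + 1), pprod_succ x (2 * m + 1)]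
    rw [if_pos (by omega : (2 * m + 1 + 1) % 2 = 0),
      if_neg (by omega : ¬ (2 * m + 1 + 1 + 1) % 2 = 0)]
    rw [mul_inv_rev, hxinv, hρinv]
    simp only [mul_assoc, hρc]

lemma L2 (ρ : G) (x : ℕ → G) (hρ : ρ * ρ = 1) (hx : ∀ k, x k * x k = 1) :
    ∀ m, pprod (fun k => if (k + 1) % 2 = 1 then (ρ * x k)⁻¹ else ρ * x k) (2 * m + 1)
      = pprod x (2 * m + 1) * ρ
  | 0 => by
    have hρinv : ρ⁻¹ = ρ := inv_eq_of_mul_eq_one_right hρ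
    have hxinv : ∀ k, (x k)⁻¹ = x k := fun k => inv_eq_of_mul_eq_one_right (hx k)
    rw [show 2 * 0 + 1 = 1 from rfl, pprod_succ, pprod_succ, pprod_zero, pprod_zero]
    rw [if_pos (by omega : (0 + 1) % 2 = 1), mul_inv_rev, hxinv, hρinv]
    simp [mul_assoc]
  | m + 1 => by
    have hρc : ∀ t : G, ρ * (ρ * t) = t := fun t => by rw [← mul_assoc, hρ, one_mul]
    have hρinv : ρ⁻¹ = ρ := inv_eq_of_mul_eq_one_right hρ
    have hxinv : ∀ k, (x k)⁻¹ = x k := fun k => inv_eq_of_mul_eq_one_right (hx k)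
    have h3 : 2 * (m + 1) + 1 = (2 * m + 1) + 1 + 1 := by omega
    rw [h3, pprod_succ _ (2 * m + 1 + 1), pprod_succ _ (2 * m + 1), L2 ρ x hρ hx m,
      pprod_succ x (2 * m + 1 + 1), pprod_succ x (2 * m + 1)]
    rw [if_neg (by omega : ¬ (2 * m + 1 + 1) % 2 = 1),
      if_pos (by omega : (2 * m + 1 + 1 + 1) % 2 = 1)]
    rw [mul_inv_rev, hxinv, hρinv]
    simp only [mul_assoc, hρc]

lemma L3 (r : G) (y : ℕ → G) (hr : r * r = 1) (hyr : ∀ k, y k * r = r * (y k)⁻¹) :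
    ∀ m, pprod (fun k => r * y k) (2 * m + 1)
      = r * pprod (fun k => if (k + 1) % 2 = 0 then (y k)⁻¹ else y k) (2 * m + 1)
  | 0 => by
    rw [show 2 * 0 + 1 = 1 from rfl, pprod_succ, pprod_succ, pprod_zero, pprod_zero]
    rw [if_neg (by omega : ¬ (0 + 1) % 2 = 0), mul_assoc]
  | m + 1 => by
    have hrc : ∀ t : G, r * (r * t) = t := fun t => by rw [← mul_assoc, hr, one_mul]
    have hswap : ∀ k (t : G), y k * (r * t) = r * ((y k)⁻¹ * t) := fun k t => by
      rw [← mul_assoc, hyr, mul_assoc]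
    have h3 : 2 * (m + 1) + 1 = (2 * m + 1) + 1 + 1 := by omega
    rw [h3, pprod_succ _ (2 * m + 1 + 1), pprod_succ _ (2 * m + 1), L3 r y hr hyr m,
      pprod_succ (fun k => if (k + 1) % 2 = 0 then (y k)⁻¹ else y k) (2 * m + 1 + 1),
      pprod_succ (fun k => if (k + 1) % 2 = 0 then (y k)⁻¹ else y k) (2 * m + 1)]
    rw [if_pos (by omega : (2 * m + 1 + 1) % 2 = 0),
      if_neg (by omega : ¬ (2 * m + 1 + 1 + 1) % 2 = 0)]
    simp only [mul_assoc]
    rw [hswap (2 * m + 1), hrc]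

lemma rel_one {α : Type*} {rels : Set (FreeGroup α)} {w : FreeGroup α} (h : w ∈ rels) :
    PresentedGroup.mk rels w = 1 :=
  (QuotientGroup.eq_one_iff w).mpr (Subgroup.subset_normalClosure h)

end HisoAux


namespace HisoAux2
open HisoAux

section
variable (n : ℕ)

def rhoQ (hn : 6 ≤ n) : PresentedGroup (HnRels n) := .of ⟨n - 1, (by omega : n - 1 < n + 0)⟩

def xQ (hn : 6 ≤ n) : ℕ → PresentedGroup (HnRels n) :=
  fun k => .of ⟨min k (n - 2), by omega⟩

def FQ (hn : 6 ≤ n) : Option (Fin (n - 1)) → PresentedGroup (HnRels n) :=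
  fun o => o.elim (rhoQ n hn) (fun j => rhoQ n hn * xQ n hn j.val)

def rrH : PresentedGroup (HRels n) := .of none

def yH : ℕ → PresentedGroup (HRels n) :=
  fun k => if h : k < n - 1 then .of (some ⟨k, h⟩) else 1

def PsiH : Fin n → PresentedGroup (HRels n) := fun i => rrH n * yH n i.val

lemma sqQ (i : Fin n) : (.of i : PresentedGroup (HnRels n)) * .of i = 1 := by
  have := rel_one (rels := HnRels n) (w := FreeGroup.of i * FreeGroup.of i)
    (Set.mem_union_left _ ⟨i, rfl⟩)
  rwa [map_mul] at this

lemma bigQ (hn : 6 ≤ n) (m : ℕ) (hm : n = 2 * m + 2) :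
    rhoQ n hn * pprod (xQ n hn) (2 * m + 1) = 1 := by
  have hcomp : (⇑(PresentedGroup.mk (HnRels n)) ∘ fun i : Fin n => FreeGroup.of i)
      = fun i : Fin n => (fun k => if k = n - 1 then rhoQ n hn else xQ n hn k) i.val := by
    funext i
    simp only [Function.comp_apply]
    by_cases h : (i : ℕ) = n - 1
    · rw [if_pos h]
      exact congrArg PresentedGroup.of (Fin.ext (by simp [h, rhoQ]))
    · rw [if_neg h]
      exact congrArg PresentedGroup.of (Fin.ext (by
        have := i.isLt; simp only [xQ]; omega))
  have h1 : pprod (fun k => if k = n - 1 then rhoQ n hn else xQ n hn k) n = 1 := by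
    rw [← revprod_eq, ← hcomp, ← List.map_ofFn, ← List.map_reverse, ← map_list_prod]
    exact rel_one (Set.mem_union_right _ rfl)
  have h2 : pprod (fun k => if k = n - 1 then rhoQ n hn else xQ n hn k) ((2 * m + 1) + 1)
      = 1 := by rw [show (2 * m + 1) + 1 = n from by omega]; exact h1
  rw [pprod_succ] at h2
  rw [if_pos (by omega : 2 * m + 1 = n - 1)] at h2
  rw [pprod_congr (2 * m + 1) (fun k hk => by rw [if_neg (by omega : ¬ k = n - 1)])] at h2
  exact h2

lemma pxQ (hn : 6 ≤ n) (m : ℕ) (hm : n = 2 * m + 2) :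
    pprod (xQ n hn) (2 * m + 1) = rhoQ n hn :=
  (inv_eq_of_mul_eq_one_right (bigQ n hn m hm)).symm.trans
    (inv_eq_of_mul_eq_one_right (sqQ n _))

lemma sqH : rrH n * rrH n = 1 := by
  have := rel_one (rels := HRels n)
    (w := FreeGroup.of (none : Option (Fin (n - 1))) * FreeGroup.of none)
    (Set.mem_union_left _ (Set.mem_union_right _ rfl))
  rwa [map_mul] at this

lemma conjH (j : Fin (n - 1)) :
    rrH n * .of (some j) * rrH n * .of (some j) = 1 := by
  have := rel_one (rels := HRels n)
    (w := FreeGroup.of (none : Option (Fin (n - 1))) * FreeGroup.of (some j)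
      * FreeGroup.of none * FreeGroup.of (some j))
    (Set.mem_union_right _ ⟨j, rfl⟩)
  rwa [map_mul, map_mul, map_mul] at this

lemma yrH (k : ℕ) : yH n k * rrH n = rrH n * (yH n k)⁻¹ := by
  unfold yH
  by_cases h : k < n - 1
  · rw [dif_pos h]
    set g : PresentedGroup (HRels n) := .of (some ⟨k, h⟩) with hg
    have h1 : rrH n * g * rrH n = g⁻¹ := eq_inv_of_mul_eq_one_left (by
      have := conjH n ⟨k, h⟩; rwa [← hg] at this)
    rw [← h1]
    calc g * rrH n = (rrH n * rrH n) * (g * rrH n) := by rw [sqH, one_mul]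
      _ = rrH n * (rrH n * g * rrH n) := by simp [mul_assoc]
  · rw [dif_neg h]; simp

lemma rel1H (m : ℕ) (hm : n = 2 * m + 2) :
    pprod (fun k => if (k + 1) % 2 = 0 then (yH n k)⁻¹ else yH n k) (2 * m + 1) = 1 := by
  have hcomp : (⇑(PresentedGroup.mk (HRels n)) ∘ fun j : Fin (n - 1) =>
      if (j.val + 1) % 2 = 0 then (FreeGroup.of (some j))⁻¹ else FreeGroup.of (some j))
      = fun j : Fin (n - 1) =>
        (fun k => if (k + 1) % 2 = 0 then (yH n k)⁻¹ else yH n k) j.val := by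
    funext j
    have hy : yH n j.val = PresentedGroup.mk (HRels n) (FreeGroup.of (some j)) := by
      unfold yH; rw [dif_pos j.isLt]; rfl
    simp only [Function.comp_apply, apply_ite (PresentedGroup.mk (HRels n)), map_inv, hy]
  have h1 : pprod (fun k => if (k + 1) % 2 = 0 then (yH n k)⁻¹ else yH n k) (n - 1) = 1 := by
    rw [← revprod_eq, ← hcomp, ← List.map_ofFn, ← List.map_reverse, ← map_list_prod]
    exact rel_one (Set.mem_union_left _ (Set.mem_union_left _ (Set.mem_union_left _ rfl)))
  rw [show 2 * m + 1 = n - 1 from by omega]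
  exact h1

end
end HisoAux2

namespace HisoAux2
open HisoAux

lemma liftF_rels (n : ℕ) (hn : 6 ≤ n) (m : ℕ) (hm : n = 2 * m + 2) :
    ∀ w ∈ HRels n, FreeGroup.lift (FQ n hn) w = 1 := by
  have hρ : rhoQ n hn * rhoQ n hn = 1 := sqQ n _
  have hx : ∀ k, xQ n hn k * xQ n hn k = 1 := fun k => sqQ n _
  have hρc : ∀ t, rhoQ n hn * (rhoQ n hn * t) = t := fun t => by
    rw [← mul_assoc, hρ, one_mul]
  intro w hw
  simp only [HRels, Set.mem_union, Set.mem_singleton_iff, Set.mem_setOf_eq] at hw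
  obtain ((h | h) | h) | ⟨j, h⟩ := hw <;> subst h
  · have hcomp : (⇑(FreeGroup.lift (FQ n hn)) ∘ fun j : Fin (n - 1) =>
        if (j.val + 1) % 2 = 0 then (FreeGroup.of (some j))⁻¹ else FreeGroup.of (some j))
        = fun j : Fin (n - 1) => (fun k => if (k + 1) % 2 = 0 then
            (rhoQ n hn * xQ n hn k)⁻¹ else rhoQ n hn * xQ n hn k) j.val := by
      funext j
      simp only [Function.comp_apply, apply_ite (FreeGroup.lift (FQ n hn)), map_inv,
        FreeGroup.lift_apply_of]
      rfl
    rw [map_list_prod, List.map_reverse, List.map_ofFn, hcomp,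
      revprod_eq (fun k => if (k + 1) % 2 = 0 then
        (rhoQ n hn * xQ n hn k)⁻¹ else rhoQ n hn * xQ n hn k) (n - 1),
      show n - 1 = 2 * m + 1 from by omega, L1 _ _ hρ hx m, pxQ n hn m hm]
    exact hρ
  · have hcomp : (⇑(FreeGroup.lift (FQ n hn)) ∘ fun j : Fin (n - 1) =>
        if (j.val + 1) % 2 = 1 then (FreeGroup.of (some j))⁻¹ else FreeGroup.of (some j))
        = fun j : Fin (n - 1) => (fun k => if (k + 1) % 2 = 1 then
            (rhoQ n hn * xQ n hn k)⁻¹ else rhoQ n hn * xQ n hn k) j.val := by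
      funext j
      simp only [Function.comp_apply, apply_ite (FreeGroup.lift (FQ n hn)), map_inv,
        FreeGroup.lift_apply_of]
      rfl
    rw [map_list_prod, List.map_reverse, List.map_ofFn, hcomp,
      revprod_eq (fun k => if (k + 1) % 2 = 1 then
        (rhoQ n hn * xQ n hn k)⁻¹ else rhoQ n hn * xQ n hn k) (n - 1),
      show n - 1 = 2 * m + 1 from by omega, L2 _ _ hρ hx m, pxQ n hn m hm]
    exact hρ
  · rw [map_mul, FreeGroup.lift_apply_of]
    exact hρ
  · simp only [map_mul, FreeGroup.lift_apply_of]
    show rhoQ n hn * (rhoQ n hn * xQ n hn j.val) * rhoQ n hn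
      * (rhoQ n hn * xQ n hn j.val) = 1
    simp only [mul_assoc, hρc, hx]

lemma liftPsi_rels (n : ℕ) (hn : 6 ≤ n) (m : ℕ) (hm : n = 2 * m + 2) :
    ∀ w ∈ HnRels n, FreeGroup.lift (PsiH n) w = 1 := by
  have hr := sqH n
  have hyr := yrH n
  intro w hw
  simp only [HnRels, Set.mem_union, Set.mem_singleton_iff, Set.mem_setOf_eq] at hw
  obtain ⟨i, h⟩ | h := hw <;> subst h
  · simp only [map_mul, FreeGroup.lift_apply_of]
    show (rrH n * yH n i.val) * (rrH n * yH n i.val) = 1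
    by_cases hi : (i : ℕ) < n - 1
    · have hy : yH n i.val = .of (some ⟨i.val, hi⟩) := dif_pos hi
      rw [hy, ← mul_assoc]
      exact conjH n ⟨i.val, hi⟩
    · have hy : yH n i.val = 1 := dif_neg hi
      rw [hy, mul_one]
      exact hr
  · have hcomp : (⇑(FreeGroup.lift (PsiH n)) ∘ fun i : Fin n => FreeGroup.of i)
        = fun i : Fin n => (fun k => rrH n * yH n k) i.val := by
      funext i
      simp only [Function.comp_apply, FreeGroup.lift_apply_of]
      rfl
    rw [map_list_prod, List.map_reverse, List.map_ofFn, hcomp,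
      revprod_eq (fun k => rrH n * yH n k) n]
    suffices h2 : pprod (fun k => rrH n * yH n k) ((2 * m + 1) + 1) = 1 by
      rw [show (2 * m + 1) + 1 = n from by omega] at h2; exact h2
    rw [pprod_succ, L3 (rrH n) (yH n) hr hyr m, rel1H n m hm, mul_one]
    rw [show yH n (2 * m + 1) = 1 from dif_neg (by omega), mul_one]
    exact hr

lemma comp1 (n : ℕ) (hn : 6 ≤ n) (m : ℕ) (hm : n = 2 * m + 2) :
    (PresentedGroup.toGroup (liftPsi_rels n hn m hm)).comp
      (PresentedGroup.toGroup (liftF_rels n hn m hm)) = MonoidHom.id _ := by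
  apply PresentedGroup.ext
  intro x
  simp only [MonoidHom.comp_apply, MonoidHom.id_apply, PresentedGroup.toGroup.of]
  have hΨρ : PresentedGroup.toGroup (liftPsi_rels n hn m hm) (rhoQ n hn) = rrH n := by
    rw [rhoQ, PresentedGroup.toGroup.of]
    show rrH n * yH n ((⟨n - 1, by omega⟩ : Fin n) : ℕ) = rrH n
    rw [show yH n ((⟨n - 1, by omega⟩ : Fin n) : ℕ) = 1 from dif_neg (by simp), mul_one]
  cases x with
  | none => exact hΨρ
  | some j =>
    show PresentedGroup.toGroup (liftPsi_rels n hn m hm) (rhoQ n hn * xQ n hn j.val) = _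
    rw [map_mul, hΨρ, xQ, PresentedGroup.toGroup.of]
    show rrH n * (rrH n * yH n ((⟨min j.val (n - 2), by omega⟩ : Fin n) : ℕ)) = _
    have hy : yH n ((⟨min j.val (n - 2), by omega⟩ : Fin n) : ℕ)
        = PresentedGroup.of (some j) := by
      have hj := j.isLt
      rw [show ((⟨min j.val (n - 2), by omega⟩ : Fin n) : ℕ) = j.val from by simp; omega]
      rw [yH, dif_pos j.isLt]
    rw [hy, ← mul_assoc, sqH, one_mul]

lemma comp2 (n : ℕ) (hn : 6 ≤ n) (m : ℕ) (hm : n = 2 * m + 2) :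
    (PresentedGroup.toGroup (liftF_rels n hn m hm)).comp
      (PresentedGroup.toGroup (liftPsi_rels n hn m hm)) = MonoidHom.id _ := by
  apply PresentedGroup.ext
  intro i
  simp only [MonoidHom.comp_apply, MonoidHom.id_apply, PresentedGroup.toGroup.of]
  show PresentedGroup.toGroup (liftF_rels n hn m hm) (rrH n * yH n i.val) = _
  rw [map_mul]
  have hΦr : PresentedGroup.toGroup (liftF_rels n hn m hm) (rrH n) = rhoQ n hn := by
    rw [rrH, PresentedGroup.toGroup.of]
    rfl
  by_cases hi : (i : ℕ) < n - 1
  · rw [show yH n i.val = .of (some ⟨i.val, hi⟩) from dif_pos hi,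
      PresentedGroup.toGroup.of, hΦr]
    show rhoQ n hn * (rhoQ n hn * xQ n hn i.val) = _
    rw [rhoQ, ← mul_assoc, sqQ, one_mul]
    exact congrArg PresentedGroup.of (Fin.ext (by have := i.isLt; simp [xQ]; omega))
  · rw [show yH n i.val = 1 from dif_neg hi, map_one, mul_one, hΦr]
    exact congrArg PresentedGroup.of (Fin.ext (by have := i.isLt; simp [rhoQ]; omega))

end HisoAux2

/-- Let `n ≥ 6` be even.  The group `H` presented by generators
`g₁, …, g_{n-1}, r` with the two surface-group relations, `r² = 1`, and
`r · gᵢ · r = gᵢ⁻¹`, is isomorphic to `H_n` via an isomorphism `φ` with `φ r = r_n` and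
`φ gᵢ = r_n · rᵢ` for all `i = 1, …, n-1`. -/
theorem H_iso_Hn (n : ℕ) (hn : 6 ≤ n) (hEven : Even n) :
    ∃ φ : PresentedGroup (HRels n) ≃* PresentedGroup (HnRels n),
      φ (PresentedGroup.of none) = PresentedGroup.of (⟨n - 1, by omega⟩ : Fin n) ∧
      ∀ j : Fin (n - 1), φ (PresentedGroup.of (some j)) =
        PresentedGroup.of (⟨n - 1, by omega⟩ : Fin n) *
          PresentedGroup.of (Fin.castLE (by omega) j) := by
  obtain ⟨m, hm⟩ : ∃ m, n = 2 * m + 2 := by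
    obtain ⟨k, hk⟩ := hEven; exact ⟨k - 1, by omega⟩
  refine ⟨MonoidHom.toMulEquiv _ _ (HisoAux2.comp1 n hn m hm) (HisoAux2.comp2 n hn m hm),
    ?_, ?_⟩
  · show PresentedGroup.toGroup (HisoAux2.liftF_rels n hn m hm) (PresentedGroup.of none) = _
    rw [PresentedGroup.toGroup.of]
    rfl
  · intro j
    show PresentedGroup.toGroup (HisoAux2.liftF_rels n hn m hm)
      (PresentedGroup.of (some j)) = _
    rw [PresentedGroup.toGroup.of]
    show HisoAux2.rhoQ n hn * HisoAux2.xQ n hn j.val = _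
    have hx : HisoAux2.xQ n hn j.val = PresentedGroup.of (Fin.castLE (by omega) j) :=
      congrArg PresentedGroup.of (Fin.ext (by have := j.isLt; simp [HisoAux2.xQ]; omega))
    rw [hx, HisoAux2.rhoQ]
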